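/- Let S_λ be a bounded left-invertible weighted shift on a rootless, leafless directed tree T = (V,E). Then exactly one of the following holds: (i) α_λ(v) = ∞ for all v ∈ V, which occurs if and only if S_λ is analytic; or (ii) α_λ(v) < ∞ for all v ∈ V, which occurs if and only if the hyper-range ∩_{n≥0} S_λ^n(ℓ²(V)) is infinite-dimensional. In particular, if α_λ(v) < ∞ for some v ∈ V, then α_λ(w) < ∞ for every w ∈ V. -/

import Mathlib

/-- A countably infinite, leafless, rootless directed tree, encoded by its parent
function: every vertex has a child (leafless), there are no circuits, and the tree
is connected (any two vertices have a common ancestor). -/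
structure RootlessTree (V : Type*) where
  par : V → V
  leafless : ∀ u : V, ∃ w : V, par w = u
  acyclic : ∀ (u : V) (n : ℕ), 0 < n → par^[n] u ≠ u
  connected : ∀ u w : V, ∃ k l : ℕ, par^[k] u = par^[l] w

/-- `Aset T v n` is the set `A(v,n)`: `A(v,0) = {v}` and
`A(v,n) = Chi^n(par^n(v)) \ Chi^{n-1}(par^{n-1}(v))` for `n ≥ 1`. -/
def Aset {V : Type*} (T : RootlessTree V) (v : V) : ℕ → Set V
  | 0 => {v}
  | n + 1 => {w | T.par^[n + 1] w = T.par^[n + 1] v ∧ ¬ T.par^[n] w = T.par^[n] v}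

open scoped ENNReal

/-- `lamN T wt n u` is `λ⁽ⁿ⁾(u) = λ_u · λ_{par u} ⋯ λ_{parⁿ⁻¹ u}`. -/
def lamN {V : Type*} (T : RootlessTree V) (wt : V → ℝ) (n : ℕ) (u : V) : ℝ :=
  ∏ j ∈ Finset.range n, wt (T.par^[j] u)

/-- `alphaFun T wt v = α_λ(v) = Σ_{n≥0} Σ_{u ∈ A(v,n)} (λ⁽ⁿ⁾(u)/λ⁽ⁿ⁾(v))²`,
as an extended nonnegative real. -/
noncomputable def alphaFun {V : Type*} (T : RootlessTree V) (wt : V → ℝ) (v : V) : ℝ≥0∞ :=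
  ∑' n : ℕ, ∑' u : (Aset T v n), ENNReal.ofReal ((lamN T wt n u / lamN T wt n v) ^ 2)

namespace Stmt17Aux

variable {V : Type*} (T : RootlessTree V) (wt : V → ℝ)

lemma iter_up {T : RootlessTree V} {w v : V} {a b : ℕ}
    (h : T.par^[a] w = T.par^[a] v) (hab : a ≤ b) : T.par^[b] w = T.par^[b] v := by
  obtain ⟨k, rfl⟩ := Nat.exists_eq_add_of_le hab
  rw [add_comm a k, Function.iterate_add_apply, Function.iterate_add_apply, h]

/-- same generation -/
def SG (T : RootlessTree V) (u w : V) : Prop := ∃ n, T.par^[n] w = T.par^[n] u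

open scoped Classical

noncomputable def hrat (u w : V) : ℝ :=
  if h : SG T u w then lamN T wt (Nat.find h) w / lamN T wt (Nat.find h) u else 0

lemma lamN_pos (hwt : ∀ u : V, 0 < wt u) (n : ℕ) (u : V) : 0 < lamN T wt n u :=
  Finset.prod_pos fun _ _ => hwt _

lemma lamN_add (n k : ℕ) (x : V) :
    lamN T wt (n + k) x = lamN T wt n x * lamN T wt k (T.par^[n] x) := by
  unfold lamN
  rw [Finset.prod_range_add]
  congr 1
  refine Finset.prod_congr rfl fun j _ => ?_
  rw [add_comm n j, Function.iterate_add_apply]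

lemma ratio_eq (hwt : ∀ u : V, 0 < wt u) {u w : V} {n m : ℕ} (hn : T.par^[n] w = T.par^[n] u)
    (hm : T.par^[m] w = T.par^[m] u) :
    lamN T wt n w / lamN T wt n u = lamN T wt m w / lamN T wt m u := by
  wlog hnm : n ≤ m generalizing n m
  · exact (this hm hn (le_of_not_ge hnm)).symm
  obtain ⟨k, rfl⟩ := Nat.exists_eq_add_of_le hnm
  rw [lamN_add, lamN_add, hn]
  have h1 := (lamN_pos T wt hwt n u).ne'
  have h2 := (lamN_pos T wt hwt k (T.par^[n] u)).ne'
  have h3 := (lamN_pos T wt hwt n w).ne'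
  exact (mul_div_mul_right _ _ h2).symm

lemma hrat_eq (hwt : ∀ u : V, 0 < wt u) {u w : V} {n : ℕ} (h : T.par^[n] w = T.par^[n] u) :
    hrat T wt u w = lamN T wt n w / lamN T wt n u := by
  have hsg : SG T u w := ⟨n, h⟩
  simp only [hrat, dif_pos hsg]
  exact ratio_eq T wt hwt (Nat.find_spec hsg) h

lemma hrat_of_not {u w : V} (h : ¬ SG T u w) : hrat T wt u w = 0 := by
  simp only [hrat, dif_neg h]

lemma hrat_self (hwt : ∀ u : V, 0 < wt u) (u : V) : hrat T wt u u = 1 := by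
  rw [hrat_eq T wt hwt (n := 0) rfl]
  exact div_self (lamN_pos T wt hwt 0 u).ne'

lemma hrat_nonneg (hwt : ∀ u : V, 0 < wt u) (u w : V) : 0 ≤ hrat T wt u w := by
  by_cases h : SG T u w
  · obtain ⟨n, hn⟩ := h
    rw [hrat_eq T wt hwt hn]
    exact div_nonneg (lamN_pos T wt hwt n w).le (lamN_pos T wt hwt n u).le
  · rw [hrat_of_not T wt h]

lemma hrat_pos (hwt : ∀ u : V, 0 < wt u) {u w : V} (h : SG T u w) : 0 < hrat T wt u w := by
  obtain ⟨n, hn⟩ := h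
  rw [hrat_eq T wt hwt hn]
  exact div_pos (lamN_pos T wt hwt n w) (lamN_pos T wt hwt n u)

lemma mem_Aset_iff {v w : V} {n : ℕ} :
    w ∈ Aset T v n ↔ T.par^[n] w = T.par^[n] v ∧ ∀ m < n, T.par^[m] w ≠ T.par^[m] v := by
  cases n with
  | zero => simp [Aset]
  | succ n =>
    constructor
    · rintro ⟨h1, h2⟩
      exact ⟨h1, fun m hm hme => h2 (iter_up hme (by omega))⟩
    · rintro ⟨h1, h2⟩
      exact ⟨h1, h2 n (Nat.lt_succ_self n)⟩

lemma alpha_eq (hwt : ∀ u : V, 0 < wt u) (v : V) :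
    alphaFun T wt v = ∑' w : V, ENNReal.ofReal (hrat T wt v w ^ 2) := by
  set G : V → ℝ≥0∞ := fun w => ENNReal.ofReal (hrat T wt v w ^ 2) with hG
  have h1 : alphaFun T wt v = ∑' n : ℕ, ∑' u : (Aset T v n), G u := by
    unfold alphaFun
    refine tsum_congr fun n => tsum_congr fun u => ?_
    have hu := u.2
    rw [mem_Aset_iff T] at hu
    rw [hG]
    simp only
    rw [hrat_eq T wt hwt hu.1]
  have h2 : ∑' (p : Σ n, (Aset T v n)), G p.2 = ∑' (n : ℕ) (u : (Aset T v n)), G u :=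
    ENNReal.tsum_sigma' _
  rw [h1, ← h2]
  have hinj : Function.Injective (fun p : Σ n, (Aset T v n) => (p.2 : V)) := by
    rintro ⟨n, u, hu⟩ ⟨m, u', hu'⟩ h
    simp only at h
    subst h
    rw [mem_Aset_iff T] at hu hu'
    have hnm : n = m := by
      by_contra hne
      rcases Nat.lt_or_ge n m with hlt | hge
      · exact hu'.2 n hlt hu.1
      · exact hu.2 m (by omega) hu'.1
    subst hnm
    rfl
  have hsupp : Function.support G ⊆ Set.range (fun p : Σ n, (Aset T v n) => (p.2 : V)) := by
    intro w hw
    have hsg : SG T v w := by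
      by_contra h
      apply hw
      simp only [hG, hrat_of_not T wt h]
      simp
    have hmem : w ∈ Aset T v (Nat.find hsg) := by
      rw [mem_Aset_iff T]
      exact ⟨Nat.find_spec hsg, fun m hm => Nat.find_min hsg hm⟩
    exact ⟨⟨Nat.find hsg, ⟨w, hmem⟩⟩, rfl⟩
  exact hinj.tsum_eq hsupp


lemma lamN_succ_left (n : ℕ) (x : V) :
    lamN T wt (n + 1) x = wt x * lamN T wt n (T.par x) := by
  have h1 : lamN T wt 1 x = wt x := by unfold lamN; simp
  rw [add_comm n 1, lamN_add, h1, Function.iterate_one]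

lemma SG_par {v w : V} (h : SG T v w) : SG T (T.par v) (T.par w) := by
  obtain ⟨n, hn⟩ := h
  exact ⟨n, by
    rw [← Function.iterate_succ_apply, ← Function.iterate_succ_apply]
    exact iter_up hn (Nat.le_succ n)⟩

lemma SG_of_par {v w : V} (h : SG T (T.par v) (T.par w)) : SG T v w := by
  obtain ⟨n, hn⟩ := h
  exact ⟨n + 1, by rw [Function.iterate_succ_apply, Function.iterate_succ_apply]; exact hn⟩

lemma hrat_child (hwt : ∀ u : V, 0 < wt u) (v w : V) :
    hrat T wt v w = (wt w / wt v) * hrat T wt (T.par v) (T.par w) := by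
  by_cases h : SG T v w
  · obtain ⟨n, hn⟩ := h
    have hn1 : T.par^[n] (T.par w) = T.par^[n] (T.par v) := by
      rw [← Function.iterate_succ_apply, ← Function.iterate_succ_apply]
      exact iter_up hn (Nat.le_succ n)
    rw [hrat_eq T wt hwt (iter_up hn (Nat.le_succ n)), hrat_eq T wt hwt hn1,
      lamN_succ_left, lamN_succ_left]
    have h1 := (hwt v).ne'
    have h2 := (lamN_pos T wt hwt n (T.par v)).ne'
    field_simp
  · rw [hrat_of_not T wt h, hrat_of_not T wt (fun hc => h (SG_of_par T hc)), mul_zero]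

/-- total squared weight over the children of `u'`. -/
noncomputable def Wsum (u' : V) : ℝ≥0∞ :=
  ∑' w : V, if T.par w = u' then ENNReal.ofReal (wt w ^ 2) else 0

lemma Wsum_eq (u' : V) :
    Wsum T wt u' = ∑' w : {w : V // T.par w = u'}, ENNReal.ofReal (wt (w : V) ^ 2) := by
  have hsupp : Function.support
      (fun w : V => if T.par w = u' then ENNReal.ofReal (wt w ^ 2) else 0) ⊆
      Set.range (Subtype.val : {w : V // T.par w = u'} → V) := by
    intro w hw
    by_cases h : T.par w = u'
    · exact ⟨⟨w, h⟩, rfl⟩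
    · simp only [Function.mem_support, if_neg h, ne_eq, not_true_eq_false] at hw
  have h := Function.Injective.tsum_eq (Subtype.val_injective)
      (f := fun w : V => if T.par w = u' then ENNReal.ofReal (wt w ^ 2) else 0) hsupp
  rw [Wsum, ← h]
  exact tsum_congr fun c => (if_pos c.2)

lemma alpha_par (hwt : ∀ u : V, 0 < wt u) (v : V) :
    alphaFun T wt v = (ENNReal.ofReal (wt v ^ 2))⁻¹ *
      ∑' w' : V, Wsum T wt w' * ENNReal.ofReal (hrat T wt (T.par v) w' ^ 2) := by
  rw [alpha_eq T wt hwt v]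
  set G : V → ℝ≥0∞ := fun w => ENNReal.ofReal (hrat T wt v w ^ 2) with hG
  have h1 : ∑' w : V, G w
      = ∑' (p : Σ w' : V, {w : V // T.par w = w'}), G p.2 :=
    ((Equiv.sigmaFiberEquiv T.par).tsum_eq G).symm
  rw [h1, ENNReal.tsum_sigma']
  have h2 : ∀ w' : V, (∑' w : {w : V // T.par w = w'}, G w)
      = (ENNReal.ofReal (wt v ^ 2))⁻¹ *
        (Wsum T wt w' * ENNReal.ofReal (hrat T wt (T.par v) w' ^ 2)) := by
    intro w'
    calc ∑' w : {w : V // T.par w = w'}, G w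
        = ∑' w : {w : V // T.par w = w'},
            (ENNReal.ofReal (wt v ^ 2))⁻¹ *
            (ENNReal.ofReal (wt (w : V) ^ 2) * ENNReal.ofReal (hrat T wt (T.par v) w' ^ 2)) := by
          refine tsum_congr fun w => ?_
          have hw : T.par (w : V) = w' := w.2
          rw [hG]
          simp only
          rw [hrat_child T wt hwt v w, hw, mul_pow, div_pow, div_eq_mul_inv,
            ENNReal.ofReal_mul (by positivity), ENNReal.ofReal_mul (by positivity),
            ENNReal.ofReal_inv_of_pos (pow_pos (hwt v) 2)]
          ring
      _ = _ := by rw [ENNReal.tsum_mul_left, ENNReal.tsum_mul_right, ← Wsum_eq]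
  calc ∑' w' : V, (∑' w : {w : V // T.par w = w'}, G w)
      = ∑' w' : V, (ENNReal.ofReal (wt v ^ 2))⁻¹ *
        (Wsum T wt w' * ENNReal.ofReal (hrat T wt (T.par v) w' ^ 2)) := tsum_congr h2
    _ = _ := ENNReal.tsum_mul_left

lemma alpha_par_iff (hwt : ∀ u : V, 0 < wt u) {c M : ℝ} (hc : 0 < c)
    (hWl : ∀ u' : V, ENNReal.ofReal (c ^ 2) ≤ Wsum T wt u')
    (hWu : ∀ u' : V, Wsum T wt u' ≤ ENNReal.ofReal (M ^ 2)) (v : V) :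
    alphaFun T wt v < ⊤ ↔ alphaFun T wt (T.par v) < ⊤ := by
  rw [alpha_par T wt hwt v, alpha_eq T wt hwt (T.par v)]
  set K := ∑' w' : V, Wsum T wt w' * ENNReal.ofReal (hrat T wt (T.par v) w' ^ 2) with hK
  set a := (ENNReal.ofReal (wt v ^ 2))⁻¹ with ha
  have ha0 : a ≠ 0 := by
    rw [ha, ne_eq, ENNReal.inv_eq_zero]
    exact ENNReal.ofReal_ne_top
  have hatop : a ≠ ⊤ := by
    rw [ha, ne_eq, ENNReal.inv_eq_top]
    simp only [ENNReal.ofReal_eq_zero, not_le]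
    exact pow_pos (hwt v) 2
  have hsum : ENNReal.ofReal (c ^ 2) * (∑' w' : V, ENNReal.ofReal (hrat T wt (T.par v) w' ^ 2))
      ≤ K ∧ K ≤ ENNReal.ofReal (M ^ 2) *
        (∑' w' : V, ENNReal.ofReal (hrat T wt (T.par v) w' ^ 2)) := by
    constructor
    · rw [← ENNReal.tsum_mul_left]
      exact ENNReal.tsum_le_tsum fun w' =>
        mul_le_mul_left (hWl w') _
    · rw [← ENNReal.tsum_mul_left]
      exact ENNReal.tsum_le_tsum fun w' => mul_le_mul_left (hWu w') _
  constructor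
  · intro h
    by_contra htop
    rw [not_lt, top_le_iff] at htop
    rw [htop] at hsum
    have hc2 : ENNReal.ofReal (c ^ 2) ≠ 0 := by
      simp only [ne_eq, ENNReal.ofReal_eq_zero, not_le]; positivity
    rw [ENNReal.mul_top hc2] at hsum
    have hKtop : K = ⊤ := top_le_iff.mp hsum.1
    rw [hKtop, ENNReal.mul_top ha0] at h
    exact (lt_irrefl _ h).elim
  · intro h
    have hKlt : K < ⊤ := lt_of_le_of_lt hsum.2
      (ENNReal.mul_lt_top ENNReal.ofReal_lt_top h)
    exact ENNReal.mul_lt_top hatop.lt_top hKlt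

lemma alpha_iter_iff (hwt : ∀ u : V, 0 < wt u) {c M : ℝ} (hc : 0 < c)
    (hWl : ∀ u' : V, ENNReal.ofReal (c ^ 2) ≤ Wsum T wt u')
    (hWu : ∀ u' : V, Wsum T wt u' ≤ ENNReal.ofReal (M ^ 2)) (k : ℕ) (v : V) :
    alphaFun T wt v < ⊤ ↔ alphaFun T wt (T.par^[k] v) < ⊤ := by
  induction k with
  | zero => rfl
  | succ k ih =>
    rw [Function.iterate_succ_apply']
    exact ih.trans (alpha_par_iff T wt hwt hc hWl hWu _)

lemma alpha_propagate (hwt : ∀ u : V, 0 < wt u) {c M : ℝ} (hc : 0 < c)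
    (hWl : ∀ u' : V, ENNReal.ofReal (c ^ 2) ≤ Wsum T wt u')
    (hWu : ∀ u' : V, Wsum T wt u' ≤ ENNReal.ofReal (M ^ 2)) :
    (∃ u : V, alphaFun T wt u < ⊤) → ∀ w : V, alphaFun T wt w < ⊤ := by
  rintro ⟨u, hu⟩ w
  obtain ⟨k, l, hkl⟩ := T.connected u w
  have h1 : alphaFun T wt (T.par^[k] u) < ⊤ :=
    (alpha_iter_iff T wt hwt hc hWl hWu k u).mp hu
  rw [hkl] at h1
  exact (alpha_iter_iff T wt hwt hc hWl hWu l w).mpr h1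


lemma hrat_iter (hwt : ∀ u : V, 0 < wt u) (n : ℕ) (u w : V) :
    hrat T wt u w * lamN T wt n u
      = lamN T wt n w * hrat T wt (T.par^[n] u) (T.par^[n] w) := by
  by_cases h : SG T u w
  · obtain ⟨m, hm⟩ := h
    have hnm : T.par^[n + m] w = T.par^[n + m] u := iter_up hm (by omega)
    have hm' : T.par^[m] (T.par^[n] w) = T.par^[m] (T.par^[n] u) := by
      rw [← Function.iterate_add_apply, ← Function.iterate_add_apply]
      exact iter_up hm (by omega)
    rw [hrat_eq T wt hwt hnm, hrat_eq T wt hwt hm', lamN_add T wt n m w, lamN_add T wt n m u]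
    have h1 := (lamN_pos T wt hwt n u).ne'
    have h2 := (lamN_pos T wt hwt m (T.par^[n] u)).ne'
    have h3 := (lamN_pos T wt hwt n w).ne'
    have h4 := (lamN_pos T wt hwt m (T.par^[n] w)).ne'
    field_simp
  · have h2 : ¬ SG T (T.par^[n] u) (T.par^[n] w) := by
      rintro ⟨m, hm⟩
      exact h ⟨m + n, by
        rw [Function.iterate_add_apply, Function.iterate_add_apply]
        exact hm⟩
    rw [hrat_of_not T wt h, hrat_of_not T wt h2, zero_mul, mul_zero]

section LP

lemma two_toReal : (2 : ℝ≥0∞).toReal = 2 := by simp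

lemma lp_summable_sq (f : lp (fun _ : V => ℂ) 2) : Summable fun w => ‖f w‖ ^ 2 := by
  have h := (memℓp_gen_iff (p := 2) (by rw [two_toReal]; norm_num)
      (f := (f : ∀ _ : V, ℂ))).1 (lp.memℓp f)
  have h2 : ∀ w : V, ‖f w‖ ^ ((2 : ℝ≥0∞).toReal) = ‖f w‖ ^ 2 := fun w => by
    rw [two_toReal, Real.rpow_two]
  simpa only [h2] using h

lemma lp_norm_sq (f : lp (fun _ : V => ℂ) 2) : ‖f‖ ^ 2 = ∑' w, ‖f w‖ ^ 2 := by
  have h := lp.norm_rpow_eq_tsum (p := 2) (by rw [two_toReal]; norm_num) f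
  rw [two_toReal] at h
  rw [← Real.rpow_two, h]
  exact tsum_congr fun w => Real.rpow_two _

lemma memℓp_two_of_summable {f : ∀ _ : V, ℂ} (h : Summable fun w => ‖f w‖ ^ 2) :
    Memℓp f 2 := by
  apply memℓp_gen
  have h2 : ∀ w : V, ‖f w‖ ^ ((2 : ℝ≥0∞).toReal) = ‖f w‖ ^ 2 := fun w => by
    rw [two_toReal, Real.rpow_two]
  simpa only [h2] using h

variable (S : lp (fun _ : V => ℂ) 2 →L[ℂ] lp (fun _ : V => ℂ) 2)

lemma Spow_apply (hS : ∀ (f : lp (fun _ : V => ℂ) 2) (v : V),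
      (S f) v = (wt v : ℂ) * f (T.par v)) (n : ℕ) :
    ∀ (f : lp (fun _ : V => ℂ) 2) (w : V),
      ((S ^ n) f) w = (lamN T wt n w : ℂ) * f (T.par^[n] w) := by
  induction n with
  | zero =>
    intro f w
    simp [lamN]
  | succ n ih =>
    intro f w
    rw [pow_succ, ContinuousLinearMap.mul_apply, ih (S f) w, hS]
    have h1 : lamN T wt (n + 1) w = lamN T wt n w * wt (T.par^[n] w) :=
      Finset.prod_range_succ _ _
    rw [h1, Function.iterate_succ_apply']
    push_cast
    ring

lemma consistency (hS : ∀ (f : lp (fun _ : V => ℂ) 2) (v : V),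
      (S f) v = (wt v : ℂ) * f (T.par v))
    {g : lp (fun _ : V => ℂ) 2} (hg : ∀ n : ℕ, g ∈ Set.range ⇑(S ^ n))
    {n : ℕ} {w₁ w₂ : V} (h : T.par^[n] w₁ = T.par^[n] w₂) :
    g w₁ * (lamN T wt n w₂ : ℂ) = g w₂ * (lamN T wt n w₁ : ℂ) := by
  obtain ⟨f, hf⟩ := hg n
  have e1 : g w₁ = (lamN T wt n w₁ : ℂ) * f (T.par^[n] w₁) := by
    rw [← hf]; exact Spow_apply T wt S hS n f w₁
  have e2 : g w₂ = (lamN T wt n w₂ : ℂ) * f (T.par^[n] w₂) := by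
    rw [← hf]; exact Spow_apply T wt S hS n f w₂
  rw [e1, e2, h]
  ring

lemma hrat_norm (hwt : ∀ u : V, 0 < wt u)
    (hS : ∀ (f : lp (fun _ : V => ℂ) 2) (v : V), (S f) v = (wt v : ℂ) * f (T.par v))
    {g : lp (fun _ : V => ℂ) 2} (hg : ∀ n : ℕ, g ∈ Set.range ⇑(S ^ n))
    {v w : V} (h : SG T v w) :
    hrat T wt v w * ‖g v‖ = ‖g w‖ := by
  obtain ⟨n, hn⟩ := h
  have hcon := consistency T wt S hS hg hn
  have hnorm : ‖g w‖ * lamN T wt n v = ‖g v‖ * lamN T wt n w := by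
    have := congrArg (‖·‖) hcon
    simpa [norm_mul, Complex.norm_real, Real.norm_eq_abs, abs_of_pos (lamN_pos T wt hwt n v),
      abs_of_pos (lamN_pos T wt hwt n w)] using this
  rw [hrat_eq T wt hwt hn]
  have h1 := (lamN_pos T wt hwt n v).ne'
  field_simp
  linarith [hnorm]

open scoped Classical in
lemma Wsum_eq_norm (hS : ∀ (f : lp (fun _ : V => ℂ) 2) (v : V),
      (S f) v = (wt v : ℂ) * f (T.par v)) (u' : V) :
    Wsum T wt u' = ENNReal.ofReal (‖S (lp.single 2 u' (1 : ℂ))‖ ^ 2) := by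
  have key : ∀ w : V, ‖(S (lp.single 2 u' (1 : ℂ))) w‖ ^ 2
      = if T.par w = u' then wt w ^ 2 else 0 := by
    intro w
    rw [hS]
    by_cases h : T.par w = u'
    · rw [if_pos h, h, lp.single_apply_self]
      simp [Complex.norm_real, sq_abs]
    · rw [if_neg h, lp.single_apply_ne _ _ _ h]
      simp
  rw [lp_norm_sq, ENNReal.ofReal_tsum_of_nonneg (fun w => by positivity) (lp_summable_sq _)]
  rw [Wsum]
  refine (tsum_congr fun w => ?_).symm
  rw [key w]
  by_cases h : T.par w = u' <;> simp [h]


lemma hv_mem_range (hwt : ∀ u : V, 0 < wt u)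
    (hS : ∀ (f : lp (fun _ : V => ℂ) 2) (v : V), (S f) v = (wt v : ℂ) * f (T.par v))
    (hmem : ∀ x : V, Memℓp (fun w => ((hrat T wt x w : ℝ) : ℂ)) 2) (u : V) (n : ℕ) :
    (⟨fun w => ((hrat T wt u w : ℝ) : ℂ), hmem u⟩ : lp (fun _ : V => ℂ) 2)
      ∈ Set.range ⇑(S ^ n) := by
  refine ⟨((lamN T wt n u : ℝ) : ℂ)⁻¹ •
    (⟨fun w => ((hrat T wt (T.par^[n] u) w : ℝ) : ℂ), hmem _⟩ : lp (fun _ : V => ℂ) 2), ?_⟩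
  apply lp.ext
  funext w
  rw [Spow_apply T wt S hS n _ w]
  have hc : (((lamN T wt n u : ℝ) : ℂ)⁻¹ •
      (⟨fun w => ((hrat T wt (T.par^[n] u) w : ℝ) : ℂ), hmem _⟩ : lp (fun _ : V => ℂ) 2))
        (T.par^[n] w)
      = ((lamN T wt n u : ℝ) : ℂ)⁻¹ * ((hrat T wt (T.par^[n] u) (T.par^[n] w) : ℝ) : ℂ) := by
    rw [lp.coeFn_smul]
    rfl
  rw [hc]
  have hne : ((lamN T wt n u : ℝ) : ℂ) ≠ 0 := by
    exact_mod_cast (lamN_pos T wt hwt n u).ne'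
  have hkey := hrat_iter T wt hwt n u w
  have hkeyC : ((hrat T wt u w * lamN T wt n u : ℝ) : ℂ)
      = ((lamN T wt n w * hrat T wt (T.par^[n] u) (T.par^[n] w) : ℝ) : ℂ) := by
    exact_mod_cast congrArg (fun x : ℝ => (x : ℂ)) hkey
  push_cast at hkeyC
  field_simp
  linear_combination hkeyC.symm

end LP

end Stmt17Aux

open Stmt17Aux

/-- Dichotomy for a bounded left-invertible weighted shift on a rootless directed
tree: either `α_λ ≡ ∞` (equivalently, `S_λ` is analytic) or `α_λ` is everywhere
finite (equivalently, the hyper-range is infinite-dimensional); exactly one of the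
two alternatives holds, and finiteness of `α_λ` at one vertex propagates to all. -/
theorem stmt17 {V : Type*} [Countable V] [Infinite V] (T : RootlessTree V)
    (wt : V → ℝ) (hwt : ∀ u : V, 0 < wt u)
    (S : lp (fun _ : V => ℂ) 2 →L[ℂ] lp (fun _ : V => ℂ) 2)
    (hS : ∀ (f : lp (fun _ : V => ℂ) 2) (v : V), (S f) v = (wt v : ℂ) * f (T.par v))
    (hleft : ∃ c : ℝ, 0 < c ∧ ∀ f : lp (fun _ : V => ℂ) 2, c * ‖f‖ ≤ ‖S f‖) :
    Xor' (∀ u : V, alphaFun T wt u = ⊤) (∀ u : V, alphaFun T wt u < ⊤) ∧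
      ((∀ u : V, alphaFun T wt u = ⊤) ↔ (⋂ n : ℕ, Set.range ⇑(S ^ n)) = {0}) ∧
      ((∀ u : V, alphaFun T wt u < ⊤) ↔
        ¬ ∃ s : Finset (lp (fun _ : V => ℂ) 2),
          (⋂ n : ℕ, Set.range ⇑(S ^ n)) ⊆
            (Submodule.span ℂ (s : Set (lp (fun _ : V => ℂ) 2)) :
              Set (lp (fun _ : V => ℂ) 2))) ∧
      ((∃ u : V, alphaFun T wt u < ⊤) → ∀ w : V, alphaFun T wt w < ⊤) := by
  classical
  obtain ⟨c, hc, hcS⟩ := hleft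
  -- norm of basis vectors
  have hnorm_single : ∀ u' : V, ‖(lp.single 2 u' (1 : ℂ) : lp (fun _ : V => ℂ) 2)‖ = 1 := by
    intro u'
    have h := lp.norm_single (p := 2) (E := fun _ : V => ℂ)
      (by norm_num) u' (1 : ℂ)
    simpa using h
  -- Wsum bounds
  have hWu : ∀ u' : V, Wsum T wt u' ≤ ENNReal.ofReal (‖S‖ ^ 2) := by
    intro u'
    rw [Wsum_eq_norm T wt S hS u']
    apply ENNReal.ofReal_le_ofReal
    have h1 : ‖S (lp.single 2 u' 1)‖ ≤ ‖S‖ := by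
      calc ‖S (lp.single 2 u' 1)‖ ≤ ‖S‖ * ‖(lp.single 2 u' (1 : ℂ) : lp (fun _ : V => ℂ) 2)‖ :=
            S.le_opNorm _
        _ = ‖S‖ := by rw [hnorm_single, mul_one]
    exact pow_le_pow_left₀ (norm_nonneg _) h1 2
  have hWl : ∀ u' : V, ENNReal.ofReal (c ^ 2) ≤ Wsum T wt u' := by
    intro u'
    rw [Wsum_eq_norm T wt S hS u']
    apply ENNReal.ofReal_le_ofReal
    have h1 : c ≤ ‖S (lp.single 2 u' 1)‖ := by
      have h2 := hcS (lp.single 2 u' 1)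
      rwa [hnorm_single, mul_one] at h2
    exact pow_le_pow_left₀ hc.le h1 2
  -- propagation of finiteness
  have prop : (∃ u : V, alphaFun T wt u < ⊤) → ∀ w : V, alphaFun T wt w < ⊤ :=
    alpha_propagate T wt hwt hc hWl hWu
  have hnotP_Q : ¬ (∀ u : V, alphaFun T wt u = ⊤) → ∀ u : V, alphaFun T wt u < ⊤ := by
    intro h
    obtain ⟨u, hu⟩ := not_forall.mp h
    exact prop ⟨u, lt_top_iff_ne_top.mpr hu⟩
  have hnotQ_P : ¬ (∀ u : V, alphaFun T wt u < ⊤) → ∀ u : V, alphaFun T wt u = ⊤ := by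
    intro h u
    by_contra hu
    exact h (prop ⟨u, lt_top_iff_ne_top.mpr hu⟩)
  have hQ_notP : (∀ u : V, alphaFun T wt u < ⊤) → ¬ (∀ u : V, alphaFun T wt u = ⊤) := by
    intro hQ hP
    have v0 : V := Classical.arbitrary V
    have := hQ v0
    rw [hP v0] at this
    exact lt_irrefl _ this
  -- P → hyperrange trivial
  have hPA : (∀ u : V, alphaFun T wt u = ⊤) →
      (⋂ n : ℕ, Set.range ⇑(S ^ n)) = {0} := by
    intro hP
    apply Set.eq_singleton_iff_unique_mem.mpr
    refine ⟨Set.mem_iInter.mpr fun n => ⟨0, map_zero _⟩, ?_⟩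
    intro g hg
    rw [Set.mem_iInter] at hg
    by_contra hgne
    have hex : ∃ v : V, g v ≠ 0 := by
      by_contra hno
      push_neg at hno
      exact hgne (lp.ext (funext fun w => by rw [hno w]; rfl))
    obtain ⟨v, hv0⟩ := hex
    have hgv : ‖g v‖ ≠ 0 := by simpa using hv0
    have hbound : ∀ w : V, ENNReal.ofReal (hrat T wt v w ^ 2)
        ≤ ENNReal.ofReal ((‖g v‖ ^ 2)⁻¹) * ENNReal.ofReal (‖g w‖ ^ 2) := by
      intro w
      by_cases hsg : SG T v w
      · have h1 := hrat_norm T wt S hwt hS hg hsg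
        have heq : hrat T wt v w = ‖g w‖ / ‖g v‖ := by
          rw [eq_div_iff hgv]
          exact h1
        rw [heq, div_pow, div_eq_mul_inv, mul_comm, ← ENNReal.ofReal_mul (by positivity)]
      · rw [hrat_of_not T wt hsg]
        simp
    have hfin : (∑' w : V, ENNReal.ofReal (‖g w‖ ^ 2)) ≠ ⊤ := by
      rw [← ENNReal.ofReal_tsum_of_nonneg (fun w => by positivity) (lp_summable_sq g)]
      exact ENNReal.ofReal_ne_top
    have hle : alphaFun T wt v
        ≤ ENNReal.ofReal ((‖g v‖ ^ 2)⁻¹) * ∑' w : V, ENNReal.ofReal (‖g w‖ ^ 2) := by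
      rw [alpha_eq T wt hwt v, ← ENNReal.tsum_mul_left]
      exact ENNReal.tsum_le_tsum hbound
    rw [hP v] at hle
    have hlt : ENNReal.ofReal ((‖g v‖ ^ 2)⁻¹) * (∑' w : V, ENNReal.ofReal (‖g w‖ ^ 2)) < ⊤ :=
      ENNReal.mul_lt_top ENNReal.ofReal_lt_top (lt_top_iff_ne_top.mpr hfin)
    exact absurd hle hlt.not_ge
  -- membership of the generation vectors
  have hQmem : (∀ u : V, alphaFun T wt u < ⊤) →
      ∀ x : V, Memℓp (fun w => ((hrat T wt x w : ℝ) : ℂ)) 2 := by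
    intro hQ x
    apply memℓp_two_of_summable
    have h1 : (∑' w : V, ENNReal.ofReal (hrat T wt x w ^ 2)) ≠ ⊤ := by
      rw [← alpha_eq T wt hwt x]
      exact (hQ x).ne
    have h2 := ENNReal.summable_toReal h1
    have h3 : ∀ w : V, (ENNReal.ofReal (hrat T wt x w ^ 2)).toReal
        = ‖((hrat T wt x w : ℝ) : ℂ)‖ ^ 2 := by
      intro w
      rw [ENNReal.toReal_ofReal (by positivity), Complex.norm_real, Real.norm_eq_abs, sq_abs]
    simpa only [h3] using h2
  have hQnA : (∀ u : V, alphaFun T wt u < ⊤) →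
      (⋂ n : ℕ, Set.range ⇑(S ^ n)) ≠ {0} := by
    intro hQ hA
    have hmem := hQmem hQ
    have v0 : V := Classical.arbitrary V
    have hin : (⟨fun w => ((hrat T wt v0 w : ℝ) : ℂ), hmem v0⟩ : lp (fun _ : V => ℂ) 2)
        ∈ ⋂ n : ℕ, Set.range ⇑(S ^ n) :=
      Set.mem_iInter.mpr fun n => hv_mem_range T wt S hwt hS hmem v0 n
    rw [hA, Set.mem_singleton_iff] at hin
    have hval : ((⟨fun w => ((hrat T wt v0 w : ℝ) : ℂ), hmem v0⟩ : lp (fun _ : V => ℂ) 2)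
        : ∀ _ : V, ℂ) v0 = 0 := by
      rw [hin]
      rfl
    have : ((hrat T wt v0 v0 : ℝ) : ℂ) = 0 := hval
    rw [hrat_self T wt hwt v0] at this
    simp at this
  -- Q → B
  have hQB : (∀ u : V, alphaFun T wt u < ⊤) →
      ¬ ∃ s : Finset (lp (fun _ : V => ℂ) 2),
        (⋂ n : ℕ, Set.range ⇑(S ^ n)) ⊆
          (Submodule.span ℂ (s : Set (lp (fun _ : V => ℂ) 2)) :
            Set (lp (fun _ : V => ℂ) 2)) := by
    intro hQ
    rintro ⟨s, hsub⟩
    have hmem := hQmem hQ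
    set hv : V → lp (fun _ : V => ℂ) 2 :=
      fun x => ⟨fun w => ((hrat T wt x w : ℝ) : ℂ), hmem x⟩ with hhv
    have hv_range : ∀ x : V, hv x ∈ ⋂ n : ℕ, Set.range ⇑(S ^ n) :=
      fun x => Set.mem_iInter.mpr fun n => hv_mem_range T wt S hwt hS hmem x n
    have v0 : V := Classical.arbitrary V
    set uu : ℕ → V := fun m => T.par^[m] v0 with huu
    have hdelta : ∀ m k : ℕ, (hv (uu m)) (uu k) = if m = k then 1 else 0 := by
      intro m k
      by_cases hmk : m = k
      · subst hmk
        have : (hv (uu m)) (uu m) = ((hrat T wt (uu m) (uu m) : ℝ) : ℂ) := rfl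
        rw [this, hrat_self T wt hwt]
        simp
      · have hnsg : ¬ SG T (uu m) (uu k) := by
          rintro ⟨a, ha⟩
          rw [huu] at ha
          simp only [← Function.iterate_add_apply] at ha
          rcases Nat.lt_or_ge m k with hlt | hge
          · have hkey : T.par^[k - m] (T.par^[a + m] v0) = T.par^[a + m] v0 := by
              rw [← Function.iterate_add_apply, show k - m + (a + m) = a + k by omega]
              exact ha
            exact T.acyclic _ (k - m) (by omega) hkey
          · have hgt : k < m := by omega
            have hkey : T.par^[m - k] (T.par^[a + k] v0) = T.par^[a + k] v0 := by
              rw [← Function.iterate_add_apply, show m - k + (a + k) = a + m by omega]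
              exact ha.symm
            exact T.acyclic _ (m - k) (by omega) hkey
        have : (hv (uu m)) (uu k) = ((hrat T wt (uu m) (uu k) : ℝ) : ℂ) := rfl
        rw [this, hrat_of_not T wt hnsg, if_neg hmk]
        simp
    -- linear independence in the pi type
    let coeLM : lp (fun _ : V => ℂ) 2 →ₗ[ℂ] (V → ℂ) :=
      { toFun := fun f => ⇑f,
        map_add' := fun f g => lp.coeFn_add f g,
        map_smul' := fun a f => lp.coeFn_smul a f }
    have hLI : LinearIndependent ℂ (fun m : ℕ => hv (uu m)) := by
      apply LinearIndependent.of_comp coeLM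
      rw [linearIndependent_iff']
      intro t gq hsum i hi
      have hs := congrFun hsum (uu i)
      simp only [Finset.sum_apply, Function.comp_apply, Pi.smul_apply, smul_eq_mul,
        Pi.zero_apply] at hs
      have hone : ∀ j ∈ t, j ≠ i → gq j * (coeLM (hv (uu j))) (uu i) = 0 := by
        intro j _ hji
        have : (coeLM (hv (uu j))) (uu i) = (hv (uu j)) (uu i) := rfl
        rw [this, hdelta j i, if_neg hji, mul_zero]
      rw [Finset.sum_eq_single i (fun j hj hji => hone j hj hji)
        (fun h => absurd hi h)] at hs
      have : (coeLM (hv (uu i))) (uu i) = (hv (uu i)) (uu i) := rfl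
      rw [this, hdelta i i, if_pos rfl, mul_one] at hs
      exact hs
    haveI : FiniteDimensional ℂ (Submodule.span ℂ (s : Set (lp (fun _ : V => ℂ) 2))) :=
      FiniteDimensional.span_finset ℂ s
    have hLI2 : LinearIndependent ℂ
        (fun m : ℕ => (⟨hv (uu m), hsub (hv_range (uu m))⟩ :
          Submodule.span ℂ (s : Set (lp (fun _ : V => ℂ) 2)))) := by
      apply LinearIndependent.of_comp (Submodule.span ℂ (s : Set (lp (fun _ : V => ℂ) 2))).subtype
      exact hLI
    haveI := hLI2.finite
    exact not_finite ℕ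
  -- B → Q
  have hBQ : (¬ ∃ s : Finset (lp (fun _ : V => ℂ) 2),
        (⋂ n : ℕ, Set.range ⇑(S ^ n)) ⊆
          (Submodule.span ℂ (s : Set (lp (fun _ : V => ℂ) 2)) :
            Set (lp (fun _ : V => ℂ) 2))) →
      ∀ u : V, alphaFun T wt u < ⊤ := by
    intro hB
    by_contra hnQ
    have hP := hnotQ_P hnQ
    have hA := hPA hP
    apply hB
    refine ⟨∅, ?_⟩
    rw [hA]
    intro x hx
    rw [Set.mem_singleton_iff] at hx
    rw [hx]
    exact Submodule.zero_mem _
  -- A → P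
  have hAP : ((⋂ n : ℕ, Set.range ⇑(S ^ n)) = {0}) → ∀ u : V, alphaFun T wt u = ⊤ := by
    intro hA
    by_contra hnP
    exact hQnA (hnotP_Q hnP) hA
  refine ⟨?_, ⟨hPA, hAP⟩, ⟨hQB, hBQ⟩, prop⟩
  by_cases hP : ∀ u : V, alphaFun T wt u = ⊤
  · exact Or.inl ⟨hP, fun hQ => hQ_notP hQ hP⟩
  · exact Or.inr ⟨hnotP_Q hP, hP⟩
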